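/- arXiv:2507.19461 — 4 statements merged into one kernel-verified Lean document; each statement's English description precedes it below -/
import Mathlib

section
/- Chore swap eliminates envy of the swapping agent towards the received bundle: let X be a λ-EFX-friendly allocation with λ ≥ 1, let i ∈ N_H with X_i = S_i ∪ {j_i} not λ-EFX, and let ℓ be the agent minimizing d_i(X_ℓ), so that d_i(X_i) > λ·d_i(X_ℓ). After the (i, ℓ) swap producing X'_i = S_i ∪ X_ℓ and X'_ℓ = {j_i}, agent i does not λ-EFX-envy X'_ℓ: d_i(X'_i) ≤ λ·d_i(j_i). -/
open Finset

/-- A chore swap eliminates the λ-EFX-envy of the swapping agent towards the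
chore `jᵢ` she gives away: after the swap, `d_i(X'_i) ≤ λ·d_i(jᵢ)`. -/
theorem stmt_6 {N M : Type*} [Fintype N] [DecidableEq M]
    (d : N → M → ℝ) (hd : ∀ i j, 0 < d i j)
    (lam : ℝ) (hlam : 1 ≤ lam)
    (i : N) (S Xl : Finset M) (ji : M)
    (hji : ji ∉ S) (hdisj : Disjoint S Xl)
    (hiv : ∑ c ∈ S, d i c ≤ (lam - 1) * d i ji)
    (henvy : ∑ c ∈ insert ji S, d i c > lam * ∑ c ∈ Xl, d i c) :
    ∑ c ∈ S ∪ Xl, d i c ≤ lam * d i ji := by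
  rw [Finset.sum_union hdisj]
  rw [Finset.sum_insert hji] at henvy
  have hlam0 : 0 < lam := lt_of_lt_of_le one_pos hlam
  nlinarith [henvy, hiv, hd i ji]
end

section
/- An MPB allocation that is pEF1 is 2-EFX-friendly: let (X,p) be an integral MPB allocation with all bundles nonempty that is pEF1 (for all i, h: p_{-1}(X_i) ≤ p(X_h)), with disutilities scaled so that d_{ij} = p_j for j ∈ X_i and d_{ij} ≥ p_j for all j. Let ρ = min_i p(X_i), j_i = argmax_{j∈X_i} p_j, S_i = X_i \ {j_i}, N_0 = {i : p_{j_i} ≤ ρ}, N_H = {i : p_{j_i} > ρ}. Then: (i) for i ∈ N_0 and k ∈ N_0, d_i(X_i) ≤ 2·d_i(X_k); (ii) for i ∈ N_0 and h ∈ N_H, d_i(X_i) ≤ 2·d_i(j_h); (iii) for i ∈ N_H and k ∈ N_0, d_i(S_i) ≤ d_i(X_k); (iv) for i, h ∈ N_H, d_i(S_i) ≤ d_i(j_h). -/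
open Finset

/-- An MPB allocation (scaled so that `d = p` on own bundles) that is pEF1
is 2-EFX-friendly, with `N₀ = {i : p(jᵢ) ≤ ρ}` and `N_H = {i : p(jᵢ) > ρ}`. -/
theorem stmt_9 {N M : Type*} [Fintype N] [DecidableEq M]
    (d : N → M → ℝ) (hd : ∀ i j, 0 < d i j)
    (p : M → ℝ) (hp : ∀ j, 0 < p j)
    (X : N → Finset M) (hne : ∀ i, (X i).Nonempty)
    (jm : N → M) (hjmem : ∀ i, jm i ∈ X i)
    (hjmax : ∀ i, ∀ c ∈ X i, p c ≤ p (jm i))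
    (hscale : ∀ i, ∀ c ∈ X i, d i c = p c)
    (hge : ∀ i c, p c ≤ d i c)
    (hpEF1 : ∀ i h : N, ∑ c ∈ X i \ {jm i}, p c ≤ ∑ c ∈ X h, p c)
    (ρ : ℝ) (hρ : ∀ i, ρ ≤ ∑ c ∈ X i, p c) (hρex : ∃ i, ∑ c ∈ X i, p c = ρ) :
    (∀ i, p (jm i) ≤ ρ → ∀ k, p (jm k) ≤ ρ →
      ∑ c ∈ X i, d i c ≤ 2 * ∑ c ∈ X k, d i c) ∧
    (∀ i, p (jm i) ≤ ρ → ∀ h, ρ < p (jm h) →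
      ∑ c ∈ X i, d i c ≤ 2 * d i (jm h)) ∧
    (∀ i, ρ < p (jm i) → ∀ k, p (jm k) ≤ ρ →
      ∑ c ∈ X i \ {jm i}, d i c ≤ ∑ c ∈ X k, d i c) ∧
    (∀ i, ρ < p (jm i) → ∀ h, ρ < p (jm h) →
      ∑ c ∈ X i \ {jm i}, d i c ≤ d i (jm h)) := by
  -- sums of d over own (sub)bundles equal sums of p
  have hsum : ∀ i, ∑ c ∈ X i, d i c = ∑ c ∈ X i, p c := fun i =>
    Finset.sum_congr rfl (fun c hc => hscale i c hc)
  have hsum' : ∀ i, ∑ c ∈ X i \ {jm i}, d i c = ∑ c ∈ X i \ {jm i}, p c := fun i =>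
    Finset.sum_congr rfl (fun c hc => hscale i c (Finset.mem_sdiff.mp hc).1)
  -- splitting off the max chore
  have hsplit : ∀ i, ∑ c ∈ X i, p c = (∑ c ∈ X i \ {jm i}, p c) + p (jm i) := by
    intro i
    rw [← Finset.erase_eq, Finset.sum_erase_add _ _ (hjmem i)]
  -- the removed-max bundle price is at most ρ
  obtain ⟨i0, hi0⟩ := hρex
  have hle_ρ : ∀ i, ∑ c ∈ X i \ {jm i}, p c ≤ ρ := fun i => hi0 ▸ hpEF1 i i0
  -- p sums bounded by d sums
  have hpd : ∀ i k, ∑ c ∈ X k, p c ≤ ∑ c ∈ X k, d i c := fun i k =>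
    Finset.sum_le_sum (fun c _ => hge i c)
  refine ⟨?_, ?_, ?_, ?_⟩
  · intro i hi k hk
    have h1 : ∑ c ∈ X i, d i c ≤ (∑ c ∈ X k, p c) + ρ := by
      rw [hsum, hsplit]
      exact add_le_add (hpEF1 i k) hi
    calc ∑ c ∈ X i, d i c ≤ (∑ c ∈ X k, p c) + ρ := h1
      _ ≤ (∑ c ∈ X k, p c) + ∑ c ∈ X k, p c := by linarith [hρ k]
      _ = 2 * ∑ c ∈ X k, p c := by ring
      _ ≤ 2 * ∑ c ∈ X k, d i c := by linarith [hpd i k]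
  · intro i hi h hh
    have := hle_ρ i
    have hD := hge i (jm h)
    rw [hsum, hsplit]
    linarith
  · intro i _ k _
    rw [hsum']
    calc ∑ c ∈ X i \ {jm i}, p c ≤ ∑ c ∈ X k, p c := hpEF1 i k
      _ ≤ ∑ c ∈ X k, d i c := hpd i k
  · intro i _ h hh
    rw [hsum']
    have := hle_ρ i
    have hD := hge i (jm h)
    linarith
end

section
/- Under the ER-rounding properties, agents with two high chores have bounded 4-EFX-friendly surplus: suppose Z is an EFX allocation of high-priced chores H (each with p_j > 1/2) with |Z_i| ≥ 2 for agent i, p(Y_i \ H) ≤ 1, d_i(j) = p_j for chores in Y_i and d_i(j) ≥ p_j otherwise, and p(Z_k) ≥ 1/2 for all k. Then for all agents k: d_i(Y_i) ≤ 4·d_i(Z_k), where Y_i = (Y_i \ H) ∪ Z_i. -/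
open Finset

/-- ER-rounding: an agent holding ≥ 2 high-priced chores of an EFX allocation
`Z` of `H`, plus low chores of total price ≤ 1, is 4-EFX towards every `Z k`. -/
theorem stmt_16 {N M : Type*} [Fintype N] [DecidableEq M]
    (d : N → M → ℝ) (p : M → ℝ) (hp : ∀ j, 0 < p j)
    (H : Finset M) (hpH : ∀ j ∈ H, 1 / 2 < p j)
    (Z : N → Finset M) (hZH : ∀ k, Z k ⊆ H)
    (hZefx : ∀ k k' : N, ∀ j ∈ Z k, ∑ c ∈ Z k \ {j}, d k c ≤ ∑ c ∈ Z k', d k c)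
    (hZp : ∀ k, 1 / 2 ≤ ∑ c ∈ Z k, p c)
    (i : N) (A : Finset M) (hAH : Disjoint A H)
    (hA : ∑ c ∈ A, p c ≤ 1) (hcard : 2 ≤ (Z i).card)
    (hscale : ∀ c ∈ A ∪ Z i, d i c = p c)
    (hge : ∀ c, p c ≤ d i c) :
    ∀ k, ∑ c ∈ A ∪ Z i, d i c ≤ 4 * ∑ c ∈ Z k, d i c := by
  intro k
  have hdisj : Disjoint A (Z i) := hAH.mono_right (hZH i)
  rw [Finset.sum_union hdisj]
  have hA' : ∑ c ∈ A, d i c ≤ 1 := by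
    calc ∑ c ∈ A, d i c = ∑ c ∈ A, p c :=
          Finset.sum_congr rfl fun c hc => hscale c (mem_union_left _ hc)
      _ ≤ 1 := hA
  have hZk : 1 / 2 ≤ ∑ c ∈ Z k, d i c :=
    le_trans (hZp k) (Finset.sum_le_sum fun c _ => hge c)
  have hne : (Z i).Nonempty := card_pos.mp (by omega)
  obtain ⟨j0, hj0, hmin⟩ := Finset.exists_min_image (Z i) (d i) hne
  have hne2 : ((Z i) \ {j0}).Nonempty := by
    rw [Finset.sdiff_nonempty]
    intro hsub
    have := Finset.card_le_card hsub
    simp at this; omega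
  obtain ⟨j1, hj1⟩ := hne2
  have hpos : ∀ c ∈ (Z i) \ {j0}, 0 ≤ d i c :=
    fun c _ => le_trans (hp c).le (hge c)
  have h1 : d i j0 ≤ ∑ c ∈ (Z i) \ {j0}, d i c :=
    le_trans (hmin j1 (Finset.mem_sdiff.mp hj1).1) (Finset.single_le_sum hpos hj1)
  have hsplit : ∑ c ∈ Z i, d i c = d i j0 + ∑ c ∈ (Z i) \ {j0}, d i c := by
    rw [Finset.sdiff_singleton_eq_erase, Finset.add_sum_erase _ _ hj0]
  have hefx := hZefx i k j0 hj0
  linarith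
end

section
/- If an allocation X of chores with additive disutilities is λ-EFX-friendly (per the four properties with partition N = N_0 ⊔ N_H), then there exists a λ-EFX allocation of the same chores among the same agents. -/
open Finset

set_option linter.unusedSectionVars false
set_option maxHeartbeats 1000000

section AuxEFX

variable {N M : Type*} [Fintype N] [Fintype M] [DecidableEq N] [DecidableEq M]

def EFXAnchor (X : N → Finset M) (N0 : Finset N) (jm : N → M) (B : Finset M) : Prop :=
  (∃ k ∈ N0, X k ⊆ B) ∨ (∃ u, u ∉ N0 ∧ jm u ∈ B)

def efxZ (o : M → N) (i : N) : Finset M := Finset.univ.filter (fun c => o c = i)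

theorem efx_mem_Z {o : M → N} {i : N} {c : M} : c ∈ efxZ o i ↔ o c = i := by
  simp [efxZ]

theorem efx_pass
    (d : N → M → ℝ) (hd : ∀ i j, 0 < d i j) (lam : ℝ) (hlam : 1 ≤ lam)
    (X : N → Finset M) (N0 : Finset N) (jm : N → M)
    (hA1 : ∀ i ∉ N0, ∀ B : Finset M, EFXAnchor X N0 jm B →
      ∑ c ∈ X i \ {jm i}, d i c ≤ (lam - 1) * ∑ c ∈ B, d i c)
    (b : N → M) :
    ∀ (L : List N), L.Nodup → ∀ (o : M → N),
    (∀ v ∈ L, ∃ u, u ∉ N0 ∧ b v = jm u) →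
    (L.Pairwise fun v u => d v (b v) ≤ d v (b u)) →
    (∀ h, EFXAnchor X N0 jm (efxZ o h)) →
    (∀ v ∈ L, v ∉ N0) →
    (∀ v ∈ L, (efxZ o v = (X v \ {jm v}) ∪ {b v} ∧ b v ∉ X v \ {jm v}) ∨ (∃ c, efxZ o v = {c})) →
    (∀ j, j ∉ L → ∀ c ∈ efxZ o j, ∀ h, h ≠ j →
        ∑ c' ∈ efxZ o j \ {c}, d j c' ≤ lam * ∑ c' ∈ efxZ o h, d j c') →
    (∀ j, j ∉ L → ∀ c ∈ efxZ o j, ∀ v ∈ L,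
        ∑ c' ∈ efxZ o j \ {c}, d j c' ≤ lam * d j (b v)) →
    ∃ o' : M → N, ∀ i h : N, ∀ c ∈ efxZ o' i,
        ∑ c' ∈ efxZ o' i \ {c}, d i c' ≤ lam * ∑ c' ∈ efxZ o' h, d i c' := by
  have hnn : ∀ (i : N) (B : Finset M), (0:ℝ) ≤ ∑ c ∈ B, d i c :=
    fun i B => Finset.sum_nonneg fun c _ => (hd i c).le
  have hmono : ∀ (i : N) (B B' : Finset M), B ⊆ B' → ∑ c ∈ B, d i c ≤ ∑ c ∈ B', d i c :=
    fun i B B' h => Finset.sum_le_sum_of_subset_of_nonneg h (fun c _ _ => (hd i c).le)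
  have hlam0 : (0:ℝ) ≤ lam := by linarith
  intro L
  induction L with
  | nil =>
    intro _ o _ _ hanchor _ _ hsafea _
    refine ⟨o, fun i h c hc => ?_⟩
    by_cases hih : h = i
    · subst hih
      calc ∑ c' ∈ efxZ o h \ {c}, d h c' ≤ ∑ c' ∈ efxZ o h, d h c' :=
            hmono _ _ _ (Finset.sdiff_subset)
        _ = 1 * ∑ c' ∈ efxZ o h, d h c' := by ring
        _ ≤ lam * ∑ c' ∈ efxZ o h, d h c' := by
            have := hnn h (efxZ o h); nlinarith
    · exact hsafea i (by simp) c hc h hih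
  | cons v L' ih =>
    intro hnd o hbig hpmono hanchor hLnotN0 hshape hsafea hsafeb
    have hndL' : L'.Nodup := (List.nodup_cons.mp hnd).2
    have hvL' : v ∉ L' := (List.nodup_cons.mp hnd).1
    have hmonoL' := (List.pairwise_cons.mp hpmono).2
    have hmonohead := (List.pairwise_cons.mp hpmono).1
    have hbvbig : ∃ u, u ∉ N0 ∧ b v = jm u := hbig v (List.mem_cons_self)
    have hvN0 : v ∉ N0 := hLnotN0 v (List.mem_cons_self)
    have hanchorbv : EFXAnchor X N0 jm ({b v} : Finset M) := by
      obtain ⟨u, hu, hbu⟩ := hbvbig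
      exact Or.inr ⟨u, hu, by simp [hbu]⟩
    rcases hshape v (List.mem_cons_self) with ⟨hZv, hbvS⟩ | ⟨c₀, hZv⟩
    · -- shape S_v ∪ {b v}
      have hbvZ : b v ∈ efxZ o v := by rw [hZv]; simp
      have hsv : efxZ o v \ {b v} = X v \ {jm v} := by
        rw [hZv]; rw [Finset.union_sdiff_right]
        exact Finset.sdiff_eq_self_of_disjoint (by simpa using hbvS)
      have hsplit : ∑ c ∈ efxZ o v, d v c = (∑ c ∈ X v \ {jm v}, d v c) + d v (b v) := by
        rw [hZv, Finset.sum_union (by simpa using hbvS), Finset.sum_singleton]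
      by_cases hviol : ∃ c ∈ efxZ o v, ∃ h, h ≠ v ∧
          lam * ∑ c' ∈ efxZ o h, d v c' < ∑ c' ∈ efxZ o v \ {c}, d v c'
      · -- swap
        obtain ⟨c₀, hc₀, h₀, hh₀, hlt⟩ := hviol
        have hne : (Finset.univ.erase v).Nonempty :=
          ⟨h₀, Finset.mem_erase.mpr ⟨hh₀, Finset.mem_univ _⟩⟩
        obtain ⟨w, hw, hwmin⟩ :=
          (Finset.univ.erase v).exists_min_image (fun h => ∑ c ∈ efxZ o h, d v c) hne
        have hwv : w ≠ v := (Finset.mem_erase.mp hw).1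
        have hfmin : ∀ h : N, h ≠ v → ∑ c ∈ efxZ o w, d v c ≤ ∑ c ∈ efxZ o h, d v c :=
          fun h hh => hwmin h (Finset.mem_erase.mpr ⟨hh, Finset.mem_univ _⟩)
        have hSk : ∑ c ∈ X v \ {jm v}, d v c ≤ (lam - 1) * ∑ c ∈ efxZ o w, d v c :=
          hA1 v hvN0 _ (hanchor w)
        have he1 : ∑ c' ∈ efxZ o v \ {c₀}, d v c' ≤
            (∑ c ∈ X v \ {jm v}, d v c) + d v (b v) := by
          rw [← hsplit]; exact hmono _ _ _ Finset.sdiff_subset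
        have hkey : ∑ c ∈ efxZ o w, d v c < d v (b v) := by
          have e2 : lam * ∑ c ∈ efxZ o w, d v c ≤ lam * ∑ c' ∈ efxZ o h₀, d v c' := by
            have := hfmin h₀ hh₀; nlinarith
          nlinarith
        have hobv : o (b v) = v := efx_mem_Z.mp hbvZ
        set o₂ : M → N := fun c => if o c = w then v else if c = b v then w else o c with ho₂
        have ho₂v : ∀ c : M, o₂ c = v ↔ (o c = w ∨ (c ≠ b v ∧ o c = v)) := by
          intro c
          by_cases h1 : o c = w
          · simp [ho₂, h1]
          · by_cases h2 : c = b v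
            · subst h2
              simp only [ho₂, if_neg h1, if_pos rfl]
              constructor
              · intro hwv'; exact absurd hwv' hwv
              · rintro (hco | ⟨hne', _⟩)
                · exact absurd hco h1
                · exact absurd rfl hne'
            · simp [ho₂, h1, h2]
        have ho₂w : ∀ c : M, o₂ c = w ↔ c = b v := by
          intro c
          by_cases h1 : o c = w
          · have h2 : c ≠ b v := by
              rintro rfl; rw [hobv] at h1; exact hwv h1.symm
            simp only [ho₂, if_pos h1]
            constructor
            · intro hvw; exact absurd hvw.symm hwv
            · intro hcb; exact absurd hcb h2
          · by_cases h2 : c = b v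
            · simp [ho₂, h1, h2, hobv, Ne.symm hwv]
            · simp [ho₂, h1, h2]
        have ho₂h : ∀ g : N, g ≠ v → g ≠ w → ∀ c : M, (o₂ c = g ↔ o c = g) := by
          intro g hgv hgw c
          by_cases h1 : o c = w
          · simp only [ho₂, if_pos h1]
            constructor
            · intro hvg; exact absurd hvg.symm hgv
            · intro hog; rw [h1] at hog; exact absurd hog.symm hgw
          · by_cases h2 : c = b v
            · simp only [ho₂, if_neg h1, if_pos h2]
              constructor
              · intro hwg; exact absurd hwg.symm hgw
              · intro hog; rw [h2, hobv] at hog; exact absurd hog.symm hgv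
            · simp [ho₂, h1, h2]
        have hZ2v : efxZ o₂ v = (X v \ {jm v}) ∪ efxZ o w := by
          ext c
          simp only [efx_mem_Z, Finset.mem_union, ho₂v c]
          constructor
          · rintro (h | ⟨hcb, hcv⟩)
            · exact Or.inr (by simpa [efx_mem_Z] using h)
            · have hcc : c ∈ efxZ o v := efx_mem_Z.mpr hcv
              rw [hZv] at hcc
              rcases Finset.mem_union.mp hcc with h | h
              · exact Or.inl h
              · exact absurd (Finset.mem_singleton.mp h) hcb
          · rintro (h | h)
            · right
              constructor
              · intro hcb; rw [hcb] at h; exact hbvS h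
              · have hcc : c ∈ efxZ o v := by rw [hZv]; exact Finset.mem_union_left _ h
                exact efx_mem_Z.mp hcc
            · exact Or.inl (by simpa [efx_mem_Z] using h)
        have hZ2w : efxZ o₂ w = {b v} := by
          ext c
          simp only [efx_mem_Z, Finset.mem_singleton, ho₂w c]
        have hZ2h : ∀ g : N, g ≠ v → g ≠ w → efxZ o₂ g = efxZ o g := by
          intro g hgv hgw
          ext c
          simp only [efx_mem_Z, ho₂h g hgv hgw c]
        have hdisjSk : Disjoint (X v \ {jm v}) (efxZ o w) := by
          rw [Finset.disjoint_left]
          intro c hcS hcw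
          have hcc : c ∈ efxZ o v := by rw [hZv]; exact Finset.mem_union_left _ hcS
          rw [efx_mem_Z] at hcc hcw
          exact hwv (hcw.symm.trans hcc)
        have hsum2v : ∀ i : N, ∑ c ∈ efxZ o₂ v, d i c =
            (∑ c ∈ X v \ {jm v}, d i c) + ∑ c ∈ efxZ o w, d i c := by
          intro i; rw [hZ2v, Finset.sum_union hdisjSk]
        have hsubk2v : efxZ o w ⊆ efxZ o₂ v := by
          rw [hZ2v]; exact Finset.subset_union_right
        have hv2bound : ∑ c ∈ efxZ o₂ v, d v c ≤ lam * ∑ c ∈ efxZ o w, d v c := by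
          have := hsum2v v
          nlinarith [hnn v (efxZ o w)]
        refine ih hndL' o₂ (fun u hu => hbig u (List.mem_cons_of_mem _ hu))
          hmonoL' ?_ (fun u hu => hLnotN0 u (List.mem_cons_of_mem _ hu)) ?_ ?_ ?_
        · -- anchors
          intro g
          by_cases hgv : g = v
          · rw [hgv]
            rcases hanchor w with ⟨k', hk', hsub⟩ | ⟨u, hu, hmem⟩
            · exact Or.inl ⟨k', hk', hsub.trans hsubk2v⟩
            · exact Or.inr ⟨u, hu, hsubk2v hmem⟩
          · by_cases hgw : g = w
            · rw [hgw, hZ2w]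
              obtain ⟨u, hu, hbu⟩ := hbvbig
              exact Or.inr ⟨u, hu, by simp [hbu]⟩
            · rw [hZ2h g hgv hgw]; exact hanchor g
        · -- shapes
          intro u hu
          have huv : u ≠ v := fun h => hvL' (h ▸ hu)
          by_cases huw : u = w
          · rw [huw, hZ2w]
            exact Or.inr ⟨b v, rfl⟩
          · rw [hZ2h u huv huw]
            exact hshape u (List.mem_cons_of_mem _ hu)
        · -- safea
          intro j₁ hj₁ cc hcc e he
          by_cases hjv : j₁ = v
          · rw [hjv] at hcc he ⊢
            have hL : ∑ c' ∈ efxZ o₂ v \ {cc}, d v c' ≤ lam * ∑ c ∈ efxZ o w, d v c :=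
              (hmono _ _ _ Finset.sdiff_subset).trans hv2bound
            by_cases hew : e = w
            · rw [hew, hZ2w, Finset.sum_singleton]
              have h2 : lam * ∑ c ∈ efxZ o w, d v c ≤ lam * d v (b v) := by nlinarith
              linarith
            · rw [hZ2h e he hew]
              have h2 : lam * ∑ c ∈ efxZ o w, d v c ≤ lam * ∑ c' ∈ efxZ o e, d v c' := by
                have := hfmin e he; nlinarith
              linarith
          · by_cases hjw : j₁ = w
            · rw [hjw] at hcc ⊢
              rw [hZ2w] at hcc ⊢
              rw [Finset.mem_singleton.mp hcc, Finset.sdiff_self, Finset.sum_empty]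
              exact mul_nonneg hlam0 (hnn _ _)
            · have hjL : j₁ ∉ v :: L' := by simp [hjv, hj₁]
              rw [hZ2h j₁ hjv hjw] at hcc ⊢
              by_cases hev : e = v
              · rw [hev]
                have h1 := hsafea j₁ hjL cc hcc w (fun h => hjw h.symm)
                have h2 : ∑ c ∈ efxZ o w, d j₁ c ≤ ∑ c ∈ efxZ o₂ v, d j₁ c :=
                  hmono _ _ _ hsubk2v
                nlinarith
              · by_cases hew : e = w
                · rw [hew, hZ2w, Finset.sum_singleton]
                  exact hsafeb j₁ hjL cc hcc v (List.mem_cons_self)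
                · rw [hZ2h e hev hew]
                  exact hsafea j₁ hjL cc hcc e he
        · -- safeb
          intro j₁ hj₁ cc hcc u hu
          by_cases hjv : j₁ = v
          · rw [hjv] at hcc ⊢
            have hL : ∑ c' ∈ efxZ o₂ v \ {cc}, d v c' ≤ lam * ∑ c ∈ efxZ o w, d v c :=
              (hmono _ _ _ Finset.sdiff_subset).trans hv2bound
            have h2 : d v (b v) ≤ d v (b u) := hmonohead u hu
            have h3 : lam * ∑ c ∈ efxZ o w, d v c ≤ lam * d v (b u) := by nlinarith
            linarith
          · by_cases hjw : j₁ = w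
            · rw [hjw] at hcc ⊢
              rw [hZ2w] at hcc ⊢
              rw [Finset.mem_singleton.mp hcc, Finset.sdiff_self, Finset.sum_empty]
              exact mul_nonneg hlam0 (hd _ _).le
            · have hjL : j₁ ∉ v :: L' := by simp [hjv, hj₁]
              rw [hZ2h j₁ hjv hjw] at hcc ⊢
              exact hsafeb j₁ hjL cc hcc u (List.mem_cons_of_mem _ hu)
      · -- no violation
        push_neg at hviol
        refine ih hndL' o (fun u hu => hbig u (List.mem_cons_of_mem _ hu))
          hmonoL' hanchor (fun u hu => hLnotN0 u (List.mem_cons_of_mem _ hu))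
          (fun u hu => hshape u (List.mem_cons_of_mem _ hu)) ?_ ?_
        · intro j hj c hc h hh
          by_cases hjv : j = v
          · subst hjv
            exact hviol c hc h hh
          · exact hsafea j (by simp [hjv, hj]) c hc h hh
        · intro j hj c hc u hu
          by_cases hjv : j = v
          · subst hjv
            have e1 : ∑ c' ∈ efxZ o j \ {c}, d j c' ≤ ∑ c' ∈ efxZ o j, d j c' :=
              hmono _ _ _ (Finset.sdiff_subset)
            have e2 : ∑ c ∈ X j \ {jm j}, d j c ≤ (lam - 1) * d j (b j) := by
              have := hA1 j hvN0 {b j} hanchorbv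
              simpa using this
            have e3 : d j (b j) ≤ d j (b u) := hmonohead u hu
            have e4 : 0 < d j (b j) := hd j (b j)
            rw [hsplit] at e1
            nlinarith
          · exact hsafeb j (by simp [hjv, hj]) c hc u (List.mem_cons_of_mem _ hu)
    · -- singleton shape: no violation possible
      refine ih hndL' o (fun u hu => hbig u (List.mem_cons_of_mem _ hu))
        hmonoL' hanchor (fun u hu => hLnotN0 u (List.mem_cons_of_mem _ hu))
        (fun u hu => hshape u (List.mem_cons_of_mem _ hu)) ?_ ?_
      · intro j hj c hc h hh
        by_cases hjv : j = v
        · subst hjv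
          have h0 : efxZ o j \ {c} = ∅ := by
            rw [hZv] at hc ⊢
            rw [Finset.mem_singleton.mp hc]
            exact Finset.sdiff_self _
          rw [h0, Finset.sum_empty]
          exact mul_nonneg hlam0 (hnn _ _)
        · exact hsafea j (by simp [hjv, hj]) c hc h hh
      · intro j hj c hc u hu
        by_cases hjv : j = v
        · subst hjv
          have h0 : efxZ o j \ {c} = ∅ := by
            rw [hZv] at hc ⊢
            rw [Finset.mem_singleton.mp hc]
            exact Finset.sdiff_self _
          rw [h0, Finset.sum_empty]
          exact mul_nonneg hlam0 (hd _ _).le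
        · exact hsafeb j (by simp [hjv, hj]) c hc u (List.mem_cons_of_mem _ hu)


theorem efx_picks (d : N → M → ℝ) (m0 : M) :
    ∀ (L : List N), L.Nodup → ∀ (P : Finset M), P.card = L.length →
    ∃ b : N → M, (∀ v ∈ L, b v ∈ P) ∧ (∀ p ∈ P, ∃ v ∈ L, b v = p) ∧
      L.Pairwise (fun v u => b v ≠ b u) ∧
      L.Pairwise (fun v u => d v (b v) ≤ d v (b u)) := by
  intro L
  induction L with
  | nil =>
    intro _ P hP
    have hPe : P = ∅ := Finset.card_eq_zero.mp hP
    refine ⟨fun _ => m0, ?_, ?_, ?_, ?_⟩ <;> simp [hPe]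
  | cons v L' ih =>
    intro hnd P hP
    have hPne : P.Nonempty := by
      rw [← Finset.card_pos, hP]; simp
    obtain ⟨p₀, hp₀, hp₀min⟩ := P.exists_min_image (d v) hPne
    have hcard' : (P.erase p₀).card = L'.length := by
      rw [Finset.card_erase_of_mem hp₀, hP]; simp
    obtain ⟨b', hb'mem, hb'onto, hb'inj, hb'mono⟩ := ih (List.nodup_cons.mp hnd).2 (P.erase p₀) hcard'
    classical
    refine ⟨fun u => if u = v then p₀ else b' u, ?_, ?_, ?_, ?_⟩
    · intro u hu
      rcases List.mem_cons.mp hu with h | h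
      · simp [h, hp₀]
      · have hne : u ≠ v := by
          rintro rfl; exact (List.nodup_cons.mp hnd).1 h
        simpa [hne] using Finset.mem_of_mem_erase (hb'mem u h)
    · intro p hpP
      by_cases hpp : p = p₀
      · exact ⟨v, List.mem_cons_self, by simp [hpp]⟩
      · obtain ⟨u, hu, hbu⟩ := hb'onto p (Finset.mem_erase.mpr ⟨hpp, hpP⟩)
        have hne : u ≠ v := by
          rintro rfl; exact (List.nodup_cons.mp hnd).1 hu
        exact ⟨u, List.mem_cons_of_mem _ hu, by simp [hne, hbu]⟩
    · refine List.pairwise_cons.mpr ⟨?_, ?_⟩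
      · intro u hu
        have hne : u ≠ v := by
          rintro rfl; exact (List.nodup_cons.mp hnd).1 hu
        have : b' u ∈ P.erase p₀ := hb'mem u hu
        simp only [if_pos rfl, hne, if_neg hne]
        exact fun h => (Finset.mem_erase.mp this).1 h.symm
      · refine hb'inj.imp_of_mem ?_
        intro a c ha hc h
        have hna : a ≠ v := by rintro rfl; exact (List.nodup_cons.mp hnd).1 ha
        have hnc : c ≠ v := by rintro rfl; exact (List.nodup_cons.mp hnd).1 hc
        simpa [hna, hnc] using h
    · refine List.pairwise_cons.mpr ⟨?_, ?_⟩
      · intro u hu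
        have hne : u ≠ v := by
          rintro rfl; exact (List.nodup_cons.mp hnd).1 hu
        have : b' u ∈ P.erase p₀ := hb'mem u hu
        simp only [if_pos rfl, if_neg hne]
        exact hp₀min _ (Finset.mem_of_mem_erase this)
      · refine hb'mono.imp_of_mem ?_
        intro a c ha hc h
        have hna : a ≠ v := by rintro rfl; exact (List.nodup_cons.mp hnd).1 ha
        have hnc : c ≠ v := by rintro rfl; exact (List.nodup_cons.mp hnd).1 hc
        simpa [hna, hnc] using h


end AuxEFX

/-- Framework theorem: a λ-EFX-friendly allocation yields a λ-EFX allocation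
of the same chores among the same agents. -/
theorem stmt_17 {N M : Type*} [Fintype N] [Fintype M] [DecidableEq N] [DecidableEq M]
    (d : N → M → ℝ) (hd : ∀ i j, 0 < d i j)
    (lam : ℝ) (hlam : 1 ≤ lam)
    (X : N → Finset M) (hpart : ∀ c : M, ∃! i, c ∈ X i) (hne : ∀ i, (X i).Nonempty)
    (N0 : Finset N)
    (jm : N → M) (hjmem : ∀ i, jm i ∈ X i)
    (hjmax : ∀ i, ∀ c ∈ X i, d i c ≤ d i (jm i))
    (h1 : ∀ i ∈ N0, ∀ k ∈ N0, ∑ c ∈ X i, d i c ≤ lam * ∑ c ∈ X k, d i c)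
    (h2 : ∀ i ∈ N0, ∀ h ∉ N0, ∑ c ∈ X i, d i c ≤ lam * d i (jm h))
    (h3 : ∀ i ∉ N0, ∀ k ∈ N0, ∑ c ∈ X i \ {jm i}, d i c ≤ (lam - 1) * ∑ c ∈ X k, d i c)
    (h4 : ∀ i ∉ N0, ∀ h ∉ N0, ∑ c ∈ X i \ {jm i}, d i c ≤ (lam - 1) * d i (jm h)) :
    ∃ Y : N → Finset M, (∀ c : M, ∃! i, c ∈ Y i) ∧
      ∀ i h : N, ∀ c ∈ Y i, ∑ c' ∈ Y i \ {c}, d i c' ≤ lam * ∑ c' ∈ Y h, d i c' := by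
  classical
  have hnn : ∀ (i : N) (B : Finset M), (0:ℝ) ≤ ∑ c ∈ B, d i c :=
    fun i B => Finset.sum_nonneg fun c _ => (hd i c).le
  have hmono : ∀ (i : N) (B B' : Finset M), B ⊆ B' → ∑ c ∈ B, d i c ≤ ∑ c ∈ B', d i c :=
    fun i B B' h => Finset.sum_le_sum_of_subset_of_nonneg h (fun c _ _ => (hd i c).le)
  have hlam1 : (0:ℝ) ≤ lam - 1 := by linarith
  have hlam0 : (0:ℝ) ≤ lam := by linarith
  have hA1 : ∀ i ∉ N0, ∀ B : Finset M, EFXAnchor X N0 jm B →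
      ∑ c ∈ X i \ {jm i}, d i c ≤ (lam - 1) * ∑ c ∈ B, d i c := by
    intro i hi B hB
    rcases hB with ⟨k, hk, hsub⟩ | ⟨u, hu, hmem⟩
    · refine (h3 i hi k hk).trans ?_
      have := hmono i _ _ hsub
      nlinarith
    · refine (h4 i hi u hu).trans ?_
      have : d i (jm u) ≤ ∑ c ∈ B, d i c :=
        Finset.single_le_sum (fun c _ => (hd i c).le) hmem
      nlinarith
  have hA2 : ∀ k ∈ N0, ∀ B : Finset M, EFXAnchor X N0 jm B →
      ∑ c ∈ X k, d k c ≤ lam * ∑ c ∈ B, d k c := by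
    intro k hk B hB
    rcases hB with ⟨k', hk', hsub⟩ | ⟨u, hu, hmem⟩
    · refine (h1 k hk k' hk').trans ?_
      have := hmono k _ _ hsub
      nlinarith
    · refine (h2 k hk u hu).trans ?_
      have : d k (jm u) ≤ ∑ c ∈ B, d k c :=
        Finset.single_le_sum (fun c _ => (hd k c).le) hmem
      nlinarith
  rcases isEmpty_or_nonempty N with hN | hN
  · have hM : IsEmpty M := ⟨fun c => hN.false (hpart c).exists.choose⟩
    exact ⟨fun _ => ∅, fun c => (hM.false c).elim, fun i => (hN.false i).elim⟩
  obtain ⟨i₀⟩ := hN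
  obtain ⟨m₀, _⟩ := hne i₀
  -- jm is injective
  have hjminj : Function.Injective jm := by
    intro a a' haa
    have hmem1 := hjmem a
    rw [haa] at hmem1
    exact (hpart (jm a')).unique hmem1 (hjmem a')
  set L : List N := (N0ᶜ : Finset N).toList with hL
  have hLnd : L.Nodup := Finset.nodup_toList _
  have hLmem : ∀ v : N, v ∈ L ↔ v ∉ N0 := by
    intro v; rw [hL, Finset.mem_toList, Finset.mem_compl]
  set P : Finset M := (N0ᶜ : Finset N).image jm with hP
  have hPcard : P.card = L.length := by
    rw [hP, Finset.card_image_of_injective _ hjminj, hL, Finset.length_toList]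
  obtain ⟨b, hbmem, hbonto, hbinj, hbmono⟩ := efx_picks d m₀ L hLnd P hPcard
  have hbig : ∀ v ∈ L, ∃ u, u ∉ N0 ∧ b v = jm u := by
    intro v hv
    obtain ⟨u, hu, huv⟩ := Finset.mem_image.mp (hbmem v hv)
    exact ⟨u, Finset.mem_compl.mp hu, huv.symm⟩
  have hbinj' : ∀ v ∈ L, ∀ u ∈ L, b v = b u → v = u := by
    intro v hv u hu hbvu
    by_contra hvu
    have hsym : Symmetric (fun v u : N => b v ≠ b u) := fun x y h => h.symm
    haveI : Std.Symm (fun v u : N => b v ≠ b u) := ⟨fun x y h => hsym h⟩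
    exact (List.Pairwise.forall hbinj hv hu hvu) hbvu
  -- the X-owner
  have hxo : ∀ c : M, ∃ i, c ∈ X i := fun c => (hpart c).exists
  set xo : M → N := fun c => (hxo c).choose with hxo_def
  have hxomem : ∀ c, c ∈ X (xo c) := fun c => (hxo c).choose_spec
  have hxo_eq : ∀ c i, c ∈ X i → xo c = i := fun c i hi => ((hpart c).unique (hxomem c) hi)
  -- initial owner
  set o₀ : M → N := fun c => if hc : ∃ v, v ∈ L ∧ b v = c then hc.choose else xo c with ho₀
  have ho₀b : ∀ v ∈ L, o₀ (b v) = v := by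
    intro v hv
    have hc : ∃ u, u ∈ L ∧ b u = b v := ⟨v, hv, rfl⟩
    rw [ho₀]
    simp only [dif_pos hc]
    exact hbinj' hc.choose hc.choose_spec.1 v hv hc.choose_spec.2
  have ho₀not : ∀ c : M, (¬ ∃ v, v ∈ L ∧ b v = c) → o₀ c = xo c := by
    intro c hc; rw [ho₀]; simp only [dif_neg hc]
  have hbX : ∀ v ∈ L, ∀ i, b v ∈ X i → i ∉ N0 ∧ b v = jm i := by
    intro v hv i hbi
    obtain ⟨u, hu, hbu⟩ := hbig v hv
    have : i = u := (hpart (b v)).unique hbi (by rw [hbu]; exact hjmem u)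
    subst this
    exact ⟨hu, hbu⟩
  have hZN0 : ∀ k ∈ N0, efxZ o₀ k = X k := by
    intro k hk
    ext c
    rw [efx_mem_Z]
    constructor
    · intro hoc
      by_cases hc : ∃ v, v ∈ L ∧ b v = c
      · exfalso
        have h5 : o₀ c = hc.choose := by rw [ho₀]; simp only [dif_pos hc]
        have h6 : hc.choose ∈ L := hc.choose_spec.1
        rw [hoc] at h5
        rw [← h5] at h6
        exact (hLmem k).mp h6 hk
      · rw [ho₀not c hc] at hoc
        rw [← hoc]; exact hxomem c
    · intro hcX
      have hc : ¬ ∃ v, v ∈ L ∧ b v = c := by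
        rintro ⟨v, hv, rfl⟩
        exact ((hbX v hv k hcX).1) hk
      rw [ho₀not c hc]
      exact hxo_eq c k hcX
  have hbvS : ∀ v ∈ L, b v ∉ X v \ {jm v} := by
    intro v hv hmem'
    have h5 := (hbX v hv v (Finset.mem_sdiff.mp hmem').1).2
    rw [h5] at hmem'
    exact (Finset.mem_sdiff.mp hmem').2 (Finset.mem_singleton_self _)
  have hZNH : ∀ v ∈ L, efxZ o₀ v = (X v \ {jm v}) ∪ {b v} := by
    intro v hv
    ext c
    rw [efx_mem_Z]
    constructor
    · intro hoc
      by_cases hc : ∃ u, u ∈ L ∧ b u = c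
      · have h5 : o₀ c = hc.choose := by rw [ho₀]; simp only [dif_pos hc]
        rw [hoc] at h5
        have h6 := hc.choose_spec.2
        rw [← h5] at h6
        rw [← h6]
        exact Finset.mem_union_right _ (Finset.mem_singleton_self _)
      · rw [ho₀not c hc] at hoc
        have hcX : c ∈ X v := by rw [← hoc]; exact hxomem c
        have hcj : c ≠ jm v := by
          rintro rfl
          refine hc ?_
          have : jm v ∈ P := Finset.mem_image.mpr ⟨v, Finset.mem_compl.mpr ((hLmem v).mp hv), rfl⟩
          obtain ⟨u, hu, hbu⟩ := hbonto _ this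
          exact ⟨u, hu, hbu⟩
        exact Finset.mem_union_left _ (Finset.mem_sdiff.mpr ⟨hcX, by simpa using hcj⟩)
    · intro hcu
      rcases Finset.mem_union.mp hcu with hcS | hcb
      · have hc : ¬ ∃ u, u ∈ L ∧ b u = c := by
          rintro ⟨u, hu, rfl⟩
          have h5 := (hbX u hu v (Finset.mem_sdiff.mp hcS).1).2
          exact (Finset.mem_sdiff.mp hcS).2 (Finset.mem_singleton.mpr h5)
        rw [ho₀not c hc]
        exact hxo_eq c v (Finset.mem_sdiff.mp hcS).1
      · rw [Finset.mem_singleton.mp hcb]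
        exact ho₀b v hv
  -- anchors
  have hanchor0 : ∀ h : N, EFXAnchor X N0 jm (efxZ o₀ h) := by
    intro h
    by_cases hh : h ∈ N0
    · exact Or.inl ⟨h, hh, by rw [hZN0 h hh]⟩
    · have hhL : h ∈ L := (hLmem h).mpr hh
      obtain ⟨u, hu, hbu⟩ := hbig h hhL
      refine Or.inr ⟨u, hu, ?_⟩
      rw [hZNH h hhL, ← hbu]
      exact Finset.mem_union_right _ (Finset.mem_singleton_self _)
  -- initial safety of N0 agents
  have hsafea0 : ∀ j, j ∉ L → ∀ c ∈ efxZ o₀ j, ∀ h : N, h ≠ j →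
      ∑ c' ∈ efxZ o₀ j \ {c}, d j c' ≤ lam * ∑ c' ∈ efxZ o₀ h, d j c' := by
    intro j hj c hc h _
    have hjN0 : j ∈ N0 := by
      by_contra hjn
      exact hj ((hLmem j).mpr hjn)
    calc ∑ c' ∈ efxZ o₀ j \ {c}, d j c' ≤ ∑ c' ∈ efxZ o₀ j, d j c' :=
          hmono _ _ _ Finset.sdiff_subset
      _ = ∑ c' ∈ X j, d j c' := by rw [hZN0 j hjN0]
      _ ≤ lam * ∑ c' ∈ efxZ o₀ h, d j c' := hA2 j hjN0 _ (hanchor0 h)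
  have hsafeb0 : ∀ j, j ∉ L → ∀ c ∈ efxZ o₀ j, ∀ v ∈ L,
      ∑ c' ∈ efxZ o₀ j \ {c}, d j c' ≤ lam * d j (b v) := by
    intro j hj c hc v hv
    have hjN0 : j ∈ N0 := by
      by_contra hjn
      exact hj ((hLmem j).mpr hjn)
    obtain ⟨u, hu, hbu⟩ := hbig v hv
    calc ∑ c' ∈ efxZ o₀ j \ {c}, d j c' ≤ ∑ c' ∈ efxZ o₀ j, d j c' :=
          hmono _ _ _ Finset.sdiff_subset
      _ = ∑ c' ∈ X j, d j c' := by rw [hZN0 j hjN0]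
      _ ≤ lam * d j (jm u) := h2 j hjN0 u hu
      _ = lam * d j (b v) := by rw [hbu]
  have hshape0 : ∀ v ∈ L,
      (efxZ o₀ v = (X v \ {jm v}) ∪ {b v} ∧ b v ∉ X v \ {jm v}) ∨ (∃ c, efxZ o₀ v = {c}) :=
    fun v hv => Or.inl ⟨hZNH v hv, hbvS v hv⟩
  have hLnotN0 : ∀ v ∈ L, v ∉ N0 := fun v hv => (hLmem v).mp hv
  obtain ⟨o', hefx⟩ := efx_pass d hd lam hlam X N0 jm hA1 b L hLnd o₀
    hbig hbmono hanchor0 hLnotN0 hshape0 hsafea0 hsafeb0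
  refine ⟨efxZ o', fun c => ⟨o' c, efx_mem_Z.mpr rfl, fun y hy => (efx_mem_Z.mp hy).symm⟩, hefx⟩
end
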